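/- Theorem (MRI-v1 eliminates spurious features in the linear SEM): Let there be environments e ∈ E_tr, each a finite probability space carrying random variables z_i^e ∈ ℝ^{d_i}, z_s^e ∈ ℝ^{d_s}, y^e ∈ ℝ. Consider the linear predictor ŷ = w_iᵀ z_i + w_sᵀ z_s. Suppose E_e[z_i y] is the same vector for all e ∈ E_tr (the invariant feature correlations are conserved), and suppose the centered matrix M' whose columns are E_e[z_s y] - (1/|E_tr|)∑_{e'} E_{e'}[z_s y] has rank d_s. Then the MRI-v1 constraint — E_e[ŷ·y] takes the same value for all e ∈ E_tr — holds if and only if w_s = 0. -/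

import Mathlib

open Matrix

/-- Theorem 1 (MRI-v1 eliminates spurious features in the general linear SEM).
Environments are finite probability spaces carrying latent features
`z_i ∈ ℝ^{d_i}`, `z_s ∈ ℝ^{d_s}` and label `y`. If the invariant correlations
`E_e[z_i y]` are conserved across environments and the centered matrix of
spurious correlations `E_e[z_s y]` has full rank `d_s`, then the linear
predictor `ŷ = w_iᵀ z_i + w_sᵀ z_s` satisfies the MRI-v1 constraint
(`E_e[ŷ y]` constant over environments) iff `w_s = 0`. -/
theorem mriv1_eliminates_spurious_features
    {E : Type*} [Fintype E] {di ds : ℕ} (hE : ds < Fintype.card E)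
    {Ω : E → Type*} [∀ e, Fintype (Ω e)]
    (P : ∀ e, Ω e → ℝ) (hPpos : ∀ e ω, 0 < P e ω) (hPsum : ∀ e, ∑ ω, P e ω = 1)
    (zi : ∀ e, Ω e → Fin di → ℝ) (zs : ∀ e, Ω e → Fin ds → ℝ) (y : ∀ e, Ω e → ℝ)
    (hinv : ∀ e e' : E, ∀ j : Fin di,
      (∑ ω, P e ω * (zi e ω j * y e ω)) = (∑ ω, P e' ω * (zi e' ω j * y e' ω)))
    (M' : Matrix (Fin ds) E ℝ)
    (hM' : ∀ k e, M' k e = (∑ ω, P e ω * (zs e ω k * y e ω))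
        - (∑ e' : E, ∑ ω, P e' ω * (zs e' ω k * y e' ω)) / Fintype.card E)
    (hrank : M'.rank = ds)
    (wi : Fin di → ℝ) (ws : Fin ds → ℝ) :
    (∃ c : ℝ, ∀ e : E,
        ∑ ω, P e ω * ((wi ⬝ᵥ zi e ω + ws ⬝ᵥ zs e ω) * y e ω) = c) ↔ ws = 0 := by
  set A : E → Fin di → ℝ := fun e j => ∑ ω, P e ω * (zi e ω j * y e ω) with hA
  set S : E → Fin ds → ℝ := fun e k => ∑ ω, P e ω * (zs e ω k * y e ω) with hS
  -- expand the expectation of the predictor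
  have key : ∀ e : E, ∑ ω, P e ω * ((wi ⬝ᵥ zi e ω + ws ⬝ᵥ zs e ω) * y e ω)
      = (∑ j, wi j * A e j) + (∑ k, ws k * S e k) := by
    intro e
    have h1 : ∑ ω, P e ω * ((wi ⬝ᵥ zi e ω) * y e ω) = ∑ j, wi j * A e j := by
      simp only [hA, dotProduct, Finset.sum_mul, Finset.mul_sum]
      rw [Finset.sum_comm]
      exact Finset.sum_congr rfl fun k _ => Finset.sum_congr rfl fun ω _ => by ring
    have h2 : ∑ ω, P e ω * ((ws ⬝ᵥ zs e ω) * y e ω) = ∑ k, ws k * S e k := by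
      simp only [hS, dotProduct, Finset.sum_mul, Finset.mul_sum]
      rw [Finset.sum_comm]
      exact Finset.sum_congr rfl fun k _ => Finset.sum_congr rfl fun ω _ => by ring
    calc ∑ ω, P e ω * ((wi ⬝ᵥ zi e ω + ws ⬝ᵥ zs e ω) * y e ω)
        = ∑ ω, (P e ω * ((wi ⬝ᵥ zi e ω) * y e ω) + P e ω * ((ws ⬝ᵥ zs e ω) * y e ω)) :=
          Finset.sum_congr rfl fun ω _ => by ring
      _ = (∑ ω, P e ω * ((wi ⬝ᵥ zi e ω) * y e ω))
            + ∑ ω, P e ω * ((ws ⬝ᵥ zs e ω) * y e ω) := Finset.sum_add_distrib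
      _ = (∑ j, wi j * A e j) + (∑ k, ws k * S e k) := by rw [h1, h2]
  have hNE : Nonempty E := Fintype.card_pos_iff.mp (lt_of_le_of_lt (Nat.zero_le ds) hE)
  obtain ⟨e0⟩ := hNE
  have hAconst : ∀ e : E, ∑ j, wi j * A e j = ∑ j, wi j * A e0 j :=
    fun e => Finset.sum_congr rfl fun j _ => congrArg (fun t => wi j * t) (hinv e e0 j)
  constructor
  · rintro ⟨c, hc⟩
    -- the spurious part is constant over environments
    set c' : ℝ := c - ∑ j, wi j * A e0 j with hc'
    have hconst : ∀ e : E, ∑ k, ws k * S e k = c' := by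
      intro e
      have := hc e
      rw [key e, hAconst e] at this
      linarith
    -- hence ws annihilates the centered matrix
    have hker : ws ᵥ* M' = 0 := by
      funext e
      have hcard : (Fintype.card E : ℝ) ≠ 0 := (Nat.cast_pos.mpr (lt_of_le_of_lt (Nat.zero_le ds) hE)).ne'
      have hsum : ∑ k, ws k * ∑ e' : E, S e' k = (Fintype.card E : ℝ) * c' := by
        rw [show ∑ k, ws k * ∑ e' : E, S e' k = ∑ e' : E, ∑ k, ws k * S e' k by
          rw [Finset.sum_comm]
          exact Finset.sum_congr rfl fun k _ => Finset.mul_sum ..]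
        simp [hconst, mul_comm]
      have : (ws ᵥ* M') e = ∑ k, ws k * M' k e := by
        simp [Matrix.vecMul, dotProduct]
      rw [this]
      calc ∑ k, ws k * M' k e
          = ∑ k, (ws k * S e k - ws k * (∑ e' : E, S e' k) / Fintype.card E) := by
            exact Finset.sum_congr rfl fun k _ => by rw [hM' k e]; ring
        _ = (∑ k, ws k * S e k) - (∑ k, ws k * ∑ e' : E, S e' k) / Fintype.card E := by
            rw [Finset.sum_sub_distrib, Finset.sum_div]
        _ = c' - ((Fintype.card E : ℝ) * c') / Fintype.card E := by rw [hconst e, hsum]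
        _ = 0 := by field_simp; ring
    -- full rank kills ws
    have h1 : M'ᵀ.rank = ds := by rw [Matrix.rank_transpose]; exact hrank
    have h2 : LinearMap.ker M'.vecMulLinear = ⊥ := by
      have h3 := M'ᵀ.mulVecLin.finrank_range_add_finrank_ker
      rw [Matrix.rank] at h1
      simp [h1, Module.finrank_pi] at h3
      exact h3
    exact (LinearMap.ker_eq_bot.mp h2) (by simpa using hker)
  · rintro rfl
    exact ⟨∑ j, wi j * A e0 j, fun e => by rw [key e]; simp [hAconst e]⟩
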